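/- If L ∩ Ker ω = {0}, where L is a k-dimensional subspace of V and ω ≠ 0 is a decomposable m-form with k ≤ m, then the subspace L + Ker ω has codimension m − k in V, and there exist vectors ξ₁, …, ξ_{m−k} ∈ V linearly independent modulo L + Ker ω such that ω(ξ₁,…,ξ_{m−k}, f₁,…,f_k) ≠ 0 for any basis f₁,…,f_k of L. -/
import Mathlib


open Module

/-- The wedge product `φ₁ ∧ … ∧ φ_m` of `m` linear functionals, as an alternating `m`-form. -/
noncomputable def wedgeF {V : Type*} [AddCommGroup V] [Module ℝ V] {m : ℕ}
    (φ : Fin m → (V →ₗ[ℝ] ℝ)) : AlternatingMap ℝ V ℝ (Fin m) :=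
  Matrix.detRowAlternating.compLinearMap (LinearMap.pi φ)

/-- The kernel of an (alternating) `m`-form `f`, as a set. -/
def kerSetF {V : Type*} [AddCommGroup V] [Module ℝ V] {m : ℕ}
    (f : (Fin m → V) → ℝ) : Set V :=
  {v | ∀ w : Fin m → V, (∃ i, w i = v) → f w = 0}

lemma wedgeF_apply {V : Type*} [AddCommGroup V] [Module ℝ V] {m : ℕ}
    (φ : Fin m → (V →ₗ[ℝ] ℝ)) (w : Fin m → V) :
    wedgeF φ w = Matrix.det (Matrix.of fun i j => φ j (w i)) := rfl

lemma exists_dualF {V : Type*} [AddCommGroup V] [Module ℝ V] {m : ℕ}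
    {φ : Fin m → (V →ₗ[ℝ] ℝ)} (hω : wedgeF φ ≠ 0) :
    ∃ e : Fin m → V, ∀ i j, φ j (e i) = (1 : Matrix (Fin m) (Fin m) ℝ) i j := by
  obtain ⟨u, hu⟩ : ∃ u, wedgeF φ u ≠ 0 := by
    by_contra h; push_neg at h
    exact hω (AlternatingMap.ext fun u => h u)
  set M : Matrix (Fin m) (Fin m) ℝ := Matrix.of fun i j => φ j (u i) with hM
  have hdet : IsUnit M.det := by
    rw [wedgeF_apply] at hu; exact Ne.isUnit hu
  refine ⟨fun i => ∑ l, M⁻¹ i l • u l, fun i j => ?_⟩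
  have hinv := Matrix.nonsing_inv_mul M hdet
  calc φ j (∑ l, M⁻¹ i l • u l) = ∑ l, M⁻¹ i l * M l j := by
        simp [hM, mul_comm]
    _ = (M⁻¹ * M) i j := (Matrix.mul_apply).symm
    _ = (1 : Matrix (Fin m) (Fin m) ℝ) i j := by rw [hinv]

lemma det_updateRow_one {m : ℕ} (j : Fin m) (b : Fin m → ℝ) :
    ((1 : Matrix (Fin m) (Fin m) ℝ).updateRow j b).det = b j := by
  have h1 : ((1 : Matrix (Fin m) (Fin m) ℝ).updateRow j b)
      = Matrix.transpose ((1 : Matrix (Fin m) (Fin m) ℝ).updateCol j b) := by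
    ext i t
    by_cases h : i = j
    · subst h; simp
    · simp [Matrix.updateRow_ne h, Matrix.updateCol_apply, Matrix.one_apply, h,
        eq_comm (a := i)]
  rw [h1, Matrix.det_transpose, ← Matrix.cramer_apply, Matrix.cramer_one]
  simp

lemma kerSetF_eq {V : Type*} [AddCommGroup V] [Module ℝ V] {m : ℕ}
    {φ : Fin m → (V →ₗ[ℝ] ℝ)} (hω : wedgeF φ ≠ 0) :
    kerSetF (⇑(wedgeF φ)) = ↑(LinearMap.ker (LinearMap.pi φ)) := by
  obtain ⟨e, he⟩ := exists_dualF hω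
  ext v
  constructor
  · intro hv
    simp only [SetLike.mem_coe, LinearMap.mem_ker]
    funext j
    have h0 : wedgeF φ (Function.update e j v) = 0 := hv _ ⟨j, by simp⟩
    rw [wedgeF_apply] at h0
    have hmat : (Matrix.of fun i t => φ t (Function.update e j v i))
        = (1 : Matrix (Fin m) (Fin m) ℝ).updateRow j (fun t => φ t v) := by
      ext i t
      by_cases hij : i = j
      · subst hij; simp
      · simp [Function.update_of_ne hij, Matrix.updateRow_ne hij, he]
    rw [hmat, det_updateRow_one] at h0
    simpa using h0
  · intro hv w ⟨i, hi⟩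
    rw [wedgeF_apply]
    refine Matrix.det_eq_zero_of_row_eq_zero i fun t => ?_
    simp only [SetLike.mem_coe, LinearMap.mem_ker] at hv
    have : φ t v = 0 := congrFun hv t
    simp [Matrix.of_apply, hi, this]

lemma pi_surjF {V : Type*} [AddCommGroup V] [Module ℝ V] {m : ℕ}
    {φ : Fin m → (V →ₗ[ℝ] ℝ)} (hω : wedgeF φ ≠ 0) :
    Function.Surjective (LinearMap.pi φ) := by
  obtain ⟨e, he⟩ := exists_dualF hω
  intro c
  refine ⟨∑ i, c i • e i, ?_⟩
  funext j
  simp [LinearMap.pi_apply, he, Matrix.one_apply]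

/-- If `L ∩ Ker ω = {0}`, where `L ⊆ V` is a `k`-dimensional subspace and
`ω ≠ 0` a decomposable `m`-form (`m = r + k`, so `k ≤ m`), then `L + Ker ω` has
codimension `m − k = r` in `V`, and there exist `ξ₁,…,ξ_r ∈ V` linearly independent
modulo `L + Ker ω` such that `ω(ξ₁,…,ξ_r,f₁,…,f_k) ≠ 0` for any basis `f₁,…,f_k` of `L`. -/
theorem stmt9 {V : Type*} [AddCommGroup V] [Module ℝ V] [FiniteDimensional ℝ V]
    {k r : ℕ} (φ : Fin (r + k) → (V →ₗ[ℝ] ℝ)) (hω : wedgeF φ ≠ 0)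
    (L : Submodule ℝ V) (hL : finrank ℝ L = k)
    (K : Submodule ℝ V) (hK : (K : Set V) = kerSetF (⇑(wedgeF φ)))
    (hcap : L ⊓ K = ⊥) :
    finrank ℝ (V ⧸ (L ⊔ K)) = r ∧
    ∃ ξ : Fin r → V,
      (∀ c : Fin r → ℝ, (∑ i, c i • ξ i) ∈ L ⊔ K → c = 0) ∧
      ∀ f : Fin k → V, LinearIndependent ℝ f →
        Submodule.span ℝ (Set.range f) = L →
        wedgeF φ (Fin.append ξ f) ≠ 0 := by
  classical
  set P : V →ₗ[ℝ] (Fin (r + k) → ℝ) := LinearMap.pi φ with hPdef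
  have hKeq : K = LinearMap.ker P := by
    apply SetLike.coe_injective; rw [hK, kerSetF_eq hω]
  have hsurj : Function.Surjective P := pi_surjF hω
  have hrange : LinearMap.range P = ⊤ := LinearMap.range_eq_top.mpr hsurj
  have htarget : finrank ℝ (Fin (r + k) → ℝ) = r + k := Module.finrank_fin_fun ℝ
  have hker : (r + k) + finrank ℝ (LinearMap.ker P) = finrank ℝ V := by
    have h := LinearMap.finrank_range_add_finrank_ker P
    rw [hrange, finrank_top, htarget] at h
    exact h
  rw [← hKeq] at hker
  -- dimension of L ⊔ K
  have hsup : finrank ℝ ↥(L ⊔ K) = k + finrank ℝ K := by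
    have h := Submodule.finrank_sup_add_finrank_inf_eq L K
    rw [hcap, finrank_bot, hL] at h
    omega
  have hquot : finrank ℝ (V ⧸ (L ⊔ K)) = r := by
    have h := Submodule.finrank_quotient_add_finrank (L ⊔ K)
    rw [hsup] at h
    omega
  refine ⟨hquot, ?_⟩
  -- image of L
  set L' : Submodule ℝ (Fin (r + k) → ℝ) := L.map P with hL'def
  set Pl : ↥L →ₗ[ℝ] (Fin (r + k) → ℝ) := P ∘ₗ L.subtype with hPl
  have hPlker : LinearMap.ker Pl = ⊥ := by
    apply LinearMap.ker_eq_bot'.mpr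
    intro x hx
    have hx0 : P (x : V) = 0 := by simpa [hPl] using hx
    have hx' : (x : V) ∈ L ⊓ K := ⟨x.2, hKeq ▸ LinearMap.mem_ker.mpr hx0⟩
    rw [hcap] at hx'
    exact Subtype.ext (by simpa using hx')
  have hPlrange : LinearMap.range Pl = L' := by
    rw [hPl, LinearMap.range_comp, Submodule.range_subtype]
  have hL'rank : finrank ℝ L' = k := by
    have h := LinearMap.finrank_range_add_finrank_ker Pl
    rw [hPlker, finrank_bot, hPlrange, hL] at h
    omega
  obtain ⟨W, hWc⟩ := Submodule.exists_isCompl L'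
  have hWfr : finrank ℝ W = r := by
    have h := Submodule.finrank_add_eq_of_isCompl hWc
    rw [hL'rank, htarget] at h
    omega
  set bW : Basis (Fin r) ℝ W := Module.finBasisOfFinrankEq ℝ W hWfr with hbW
  set w : Fin r → (Fin (r + k) → ℝ) := fun i => (bW i : Fin (r + k) → ℝ) with hw
  set ξ : Fin r → V := fun i => Function.surjInv hsurj (w i) with hξ
  have hPξ : ∀ i, P (ξ i) = w i := fun i => Function.surjInv_eq hsurj (w i)
  have hspanw : Submodule.span ℝ (Set.range w) = W := by
    have h1 : Submodule.span ℝ (Set.range ⇑bW) = ⊤ := bW.span_eq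
    have h2 : Set.range w = W.subtype '' Set.range ⇑bW := by
      rw [← Set.range_comp]; rfl
    rw [h2, ← Submodule.map_span, h1, Submodule.map_top, Submodule.range_subtype]
  refine ⟨ξ, ?_, ?_⟩
  · intro c hc
    obtain ⟨l, hl, s, hs, hls⟩ := Submodule.mem_sup.mp hc
    have h1 : P (∑ i, c i • ξ i) = ∑ i, c i • w i := by
      rw [map_sum]; simp [hPξ]
    have hPs : P s = 0 := by
      rw [hKeq] at hs
      exact hs
    have h2 : P (∑ i, c i • ξ i) ∈ L' := by
      rw [← hls, map_add, hPs, add_zero]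
      exact Submodule.mem_map_of_mem hl
    have h3 : (∑ i, c i • w i) ∈ W :=
      Submodule.sum_smul_mem W c (fun i _ => (bW i).2)
    have h4 : (∑ i, c i • w i) ∈ L' ⊓ W := ⟨h1 ▸ h2, h3⟩
    rw [hWc.inf_eq_bot, Submodule.mem_bot] at h4
    have hli : LinearIndependent ℝ w := by
      have := bW.linearIndependent
      have h5 : w = W.subtype ∘ ⇑bW := rfl
      rw [h5]
      exact this.map' W.subtype (Submodule.ker_subtype W)
    funext i
    exact Fintype.linearIndependent_iff.mp hli c h4 i
  · intro f hfli hfspan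
    set g : Fin (r + k) → (Fin (r + k) → ℝ) :=
      Fin.append (fun i => P (ξ i)) (fun j => P (f j)) with hgdef
    have hg : ∀ i, P (Fin.append ξ f i) = g i := by
      intro i
      induction i using Fin.addCases with
      | left i => simp [hgdef, Fin.append_left]
      | right i => simp [hgdef, Fin.append_right]
    have hrg : Set.range g
        = Set.range (fun i => P (ξ i)) ∪ Set.range (fun j => P (f j)) := by
      ext x
      simp only [Set.mem_range, Set.mem_union]
      constructor
      · rintro ⟨i, rfl⟩
        induction i using Fin.addCases with
        | left i => exact Or.inl ⟨i, by rw [hgdef, Fin.append_left]⟩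
        | right i => exact Or.inr ⟨i, by rw [hgdef, Fin.append_right]⟩
      · rintro (⟨i, rfl⟩ | ⟨j, rfl⟩)
        · exact ⟨Fin.castAdd k i, by rw [hgdef, Fin.append_left]⟩
        · exact ⟨Fin.natAdd r j, by rw [hgdef, Fin.append_right]⟩
    have hspanf : Submodule.span ℝ (Set.range (fun j => P (f j))) = L' := by
      have : Set.range (fun j => P (f j)) = P '' Set.range f := by
        rw [← Set.range_comp]; rfl
      rw [this, ← Submodule.map_span, hfspan]
    have hspanξ : Submodule.span ℝ (Set.range (fun i => P (ξ i))) = W := by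
      have : (fun i => P (ξ i)) = w := by funext i; exact hPξ i
      rw [this, hspanw]
    have htop : Submodule.span ℝ (Set.range g) = ⊤ := by
      rw [hrg, Submodule.span_union, hspanξ, hspanf, sup_comm, hWc.sup_eq_top]
    have hcard : Fintype.card (Fin (r + k)) = finrank ℝ (Fin (r + k) → ℝ) := by
      rw [htarget, Fintype.card_fin]
    set bg : Basis (Fin (r + k)) ℝ (Fin (r + k) → ℝ) :=
      basisOfTopLeSpanOfCardEqFinrank g htop.ge hcard with hbgdef
    have hbg : ⇑bg = g := coe_basisOfTopLeSpanOfCardEqFinrank g htop.ge hcard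
    have hunit : IsUnit ((Pi.basisFun ℝ (Fin (r + k))).det g) := by
      have := (Pi.basisFun ℝ (Fin (r + k))).isUnit_det bg
      rwa [hbg] at this
    have hdetne : ((Pi.basisFun ℝ (Fin (r + k))).toMatrix g).det ≠ 0 := by
      rw [← Basis.det_apply]
      exact hunit.ne_zero
    rw [wedgeF_apply]
    have hmat : (Matrix.of fun i t => φ t (Fin.append ξ f i))
        = Matrix.transpose ((Pi.basisFun ℝ (Fin (r + k))).toMatrix g) := by
      ext i t
      have : φ t (Fin.append ξ f i) = g i t := by
        rw [← hg i]; rfl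
      simp [Matrix.transpose_apply, Basis.toMatrix_apply, Pi.basisFun_repr, this]
    rw [hmat, Matrix.det_transpose]
    exact hdetne
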